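/- A binary word w avoiding factors 000 and 111 avoids the pattern xx^Rx if and only if its associated sequence f(w) belongs to X, i.e., contains no index j with n_{j-1} ≥ n_j and n_j ≤ n_{j+1}. -/

import Mathlib

/-- A binary word avoids the pattern `x xᴿ x`: no factor `u ++ u.reverse ++ u` with `u` nonempty. -/
def AvoidsP (w : List Bool) : Prop :=
  ¬ ∃ u : List Bool, u ≠ [] ∧ (u ++ u.reverse ++ u) <:+: w

/-- A binary word avoids the factors `000` and `111`. -/
def AvoidsCubes (w : List Bool) : Prop :=
  ¬ ([false, false, false] <:+: w) ∧ ¬ ([true, true, true] <:+: w)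

/-- Alternating word: a prefix of `0101…` or `1010…`. -/
def Alt (A : List Bool) : Prop := A.Chain' (· ≠ ·)

/-- Glue the blocks `A_0 a_1 a_1 A_1 a_2 a_2 ⋯ a_k a_k A_k`. -/
def glue : List (List Bool) → List Bool → List Bool
  | [], _ => []
  | [A], _ => A
  | A :: As, [] => A ++ glue As []
  | A :: As, b :: bs => A ++ [b, b] ++ glue As bs

/-- `IsFact As bs w` : `w = A_0 b_1 b_1 A_1 ⋯ b_k b_k A_k` with all `A_i` alternating. -/
def IsFact (As : List (List Bool)) (bs : List Bool) (w : List Bool) : Prop :=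
  As.length = bs.length + 1 ∧ (∀ A ∈ As, Alt A) ∧ w = glue As bs

/-- Middle and final entries of the associated sequence: `n_i = |a_i A_i a_{i+1}|`, `n_k = |a_k A_k|`. -/
def seqMid : List (List Bool) → List ℕ
  | [] => []
  | [A] => [A.length + 1]
  | A :: As => (A.length + 2) :: seqMid As

/-- The sequence `f(w) = (n_0, …, n_k)` associated to the canonical factorization. -/
def seqOf : List (List Bool) → List ℕ
  | [] => []
  | [A] => if A.isEmpty then [] else [A.length]
  | A :: As => (A.length + 1) :: seqMid As

/-- No index `j` with `d_{j-1} ≥ d_j` and `d_j ≤ d_{j+1}`. -/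
def NoValley (d : List ℕ) : Prop :=
  ∀ j : ℕ, 1 ≤ j → j + 1 < d.length →
    ¬ (d.getD (j - 1) 0 ≥ d.getD j 0 ∧ d.getD j 0 ≤ d.getD (j + 1) 0)

/-- Membership in the set `X` of sequences. -/
def InX (d : List ℕ) : Prop := (∀ x ∈ d, 0 < x) ∧ NoValley d

/-- Type 1 (strongly unimodal): strictly increasing to a unique maximum, then strictly decreasing. -/
def Type1 (d : List ℕ) : Prop :=
  (∀ x ∈ d, 0 < x) ∧ d ≠ [] ∧ ∃ j < d.length,
    (∀ i : ℕ, i + 1 ≤ j → d.getD i 0 < d.getD (i + 1) 0) ∧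
    (∀ i : ℕ, j ≤ i → i + 1 < d.length → d.getD i 0 > d.getD (i + 1) 0)

/-- Type 2: strictly increasing, two equal consecutive maximal terms, then strictly decreasing. -/
def Type2 (d : List ℕ) : Prop :=
  (∀ x ∈ d, 0 < x) ∧ ∃ j, 1 ≤ j ∧ j < d.length ∧
    d.getD (j - 1) 0 = d.getD j 0 ∧
    (∀ i : ℕ, i + 1 ≤ j - 1 → d.getD i 0 < d.getD (i + 1) 0) ∧
    (∀ i : ℕ, j ≤ i → i + 1 < d.length → d.getD i 0 > d.getD (i + 1) 0)

/-- `v n` : number of sequences in `X` of weight `n`. -/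
noncomputable def v (n : ℕ) : ℕ := Nat.card {d : List ℕ // InX d ∧ d.sum = n}

/-- A strict partition, viewed as a finite set of positive integers. -/
def StrictPartition (s : Finset ℕ) : Prop := 0 ∉ s

/-- `utilde n` : number of pairs of partitions into distinct parts of total weight `n`. -/
noncomputable def utilde (n : ℕ) : ℕ :=
  Nat.card {p : Finset ℕ × Finset ℕ //
    StrictPartition p.1 ∧ StrictPartition p.2 ∧ p.1.sum id + p.2.sum id = n}

/-- `c n` : number of binary words of length `n` avoiding `x xᴿ x`. -/
noncomputable def c (n : ℕ) : ℕ := Nat.card {w : List Bool // w.length = n ∧ AvoidsP w}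

/-- The word `(01)^n`. -/
def w01 (n : ℕ) : List Bool := (List.replicate n [false, true]).flatten

/-- The word `(10)^n`. -/
def w10 (n : ℕ) : List Bool := (List.replicate n [true, false]).flatten

namespace Stmt19

/-- `p` is a square (doubled-letter) position of `w`. -/
def Sq (w : List Bool) (p : ℕ) : Prop :=
  p + 1 < w.length ∧ w.getD p false = w.getD (p + 1) false

instance (w : List Bool) (p : ℕ) : Decidable (Sq w p) := by
  unfold Sq; infer_instance

lemma alt_iff {A : List Bool} :
    Alt A ↔ ∀ i : ℕ, i + 1 < A.length → A.getD i false ≠ A.getD (i + 1) false := by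
  constructor
  · intro h i hi
    rw [List.getD_eq_getElem _ _ (by omega), List.getD_eq_getElem _ _ hi]
    have := List.isChain_iff_getElem.1 h i (by omega)
    simpa using this
  · intro h
    rw [Alt]; apply List.isChain_iff_getElem.2
    intro i hi
    have := h i (by omega)
    rw [List.getD_eq_getElem _ _ (by omega), List.getD_eq_getElem _ _ (by omega)] at this
    simpa using this

lemma alt_ext {u v : List Bool} (hu : Alt u) (hv : Alt v) (hlen : u.length = v.length)
    (h0 : u.getD 0 false = v.getD 0 false) : u = v := by
  have key : ∀ i, i < u.length → u.getD i false = v.getD i false := by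
    intro i
    induction i with
    | zero => intro _; exact h0
    | succ i ih =>
      intro hi
      have h1 := (alt_iff.1 hu) i hi
      have h2 := (alt_iff.1 hv) i (by omega)
      have hprev := ih (by omega)
      revert h1 h2 hprev
      cases u.getD i false <;> cases v.getD i false <;>
        cases u.getD (i+1) false <;> cases v.getD (i+1) false <;> simp
  apply List.ext_getElem hlen
  intro n h1 h2
  have := key n h1
  rwa [List.getD_eq_getElem _ _ h1, List.getD_eq_getElem _ _ (by omega)] at this

def seg (w : List Bool) (a m : ℕ) : List Bool := (w.drop a).take m

lemma seg_length {w : List Bool} {a m : ℕ} (h : a + m ≤ w.length) : (seg w a m).length = m := by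
  simp [seg]; omega

lemma seg_getD {w : List Bool} {a m i : ℕ} (h : i < m) (h2 : a + m ≤ w.length) :
    (seg w a m).getD i false = w.getD (a + i) false := by
  have h3 : i < (seg w a m).length := by rw [seg_length h2]; exact h
  have h4 : a + i < w.length := by omega
  rw [List.getD_eq_getElem _ _ h3, List.getD_eq_getElem _ _ h4]
  simp only [seg, List.getElem_take, List.getElem_drop]

lemma seg_infix (w : List Bool) (a m : ℕ) : seg w a m <:+: w :=
  ((List.take_prefix _ _).isInfix).trans ((List.drop_suffix a w).isInfix)

lemma seg_append {w : List Bool} {a m1 m2 : ℕ} :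
    seg w a (m1 + m2) = seg w a m1 ++ seg w (a + m1) m2 := by
  unfold seg
  rw [List.take_add, List.drop_drop]

lemma three_infix {w : List Bool} {p : ℕ} (h : p + 2 < w.length) :
    [w.getD p false, w.getD (p+1) false, w.getD (p+2) false] <:+: w := by
  have h3 : seg w p 3 = [w.getD p false, w.getD (p+1) false, w.getD (p+2) false] := by
    have hl : (seg w p 3).length = 3 := seg_length (by omega)
    apply List.ext_getElem (by simp [hl])
    intro n h1 h2
    rw [hl] at h1
    rw [← List.getD_eq_getElem _ false, seg_getD (by omega) (by omega)]
    interval_cases n <;> simp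
  rw [← h3]; exact seg_infix w p 3

lemma no_bbb {w : List Bool} (hc : AvoidsCubes w) (b : Bool) : ¬ ([b, b, b] <:+: w) := by
  cases b
  · exact hc.1
  · exact hc.2

lemma no_sq_sq {w : List Bool} (hc : AvoidsCubes w) {p : ℕ} (h1 : Sq w p) (h2 : Sq w (p+1)) :
    False := by
  obtain ⟨hb1, he1⟩ := h1
  obtain ⟨hb2, he2⟩ := h2
  have he2' : w.getD (p+2) false = w.getD (p+1) false := by
    rw [show p+2 = p+1+1 by omega]; exact he2.symm
  have h := three_infix (w := w) (p := p) (by omega)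
  rw [he1, he2'] at h
  exact no_bbb hc _ h

lemma alt_seg {w : List Bool} {a m : ℕ} (hb : a + m ≤ w.length)
    (h : ∀ p, a ≤ p → p + 1 < a + m → ¬ Sq w p) : Alt (seg w a m) := by
  rw [alt_iff]
  intro i hi
  rw [seg_length hb] at hi
  rw [seg_getD (by omega) hb, seg_getD (by omega) hb, show a + (i+1) = (a+i)+1 by omega]
  intro heq
  exact h (a+i) (by omega) (by omega) ⟨by omega, heq⟩

lemma alt_reverse {u : List Bool} (h : Alt u) : Alt u.reverse := by
  rw [Alt]; apply List.isChain_reverse.2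
  exact List.IsChain.imp (fun a b h' => Ne.symm h') h

lemma reverse_getD {u : List Bool} {i : ℕ} (h : i < u.length) :
    u.reverse.getD i false = u.getD (u.length - 1 - i) false := by
  rw [List.getD_eq_getElem _ _ (by simpa using h), List.getD_eq_getElem _ _ (by omega),
    List.getElem_reverse]


def sqPos : List (List Bool) → List ℕ
  | [] => []
  | [_] => []
  | A :: As => A.length :: (sqPos As).map (· + (A.length + 2))

def entMid : ℕ → List ℕ → ℕ → List ℕ
  | prev, [], n => [n - 1 - prev]
  | prev, q :: rest, n => (q - prev) :: entMid q rest n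

def ent : List ℕ → ℕ → List ℕ
  | [], n => if n = 0 then [] else [n]
  | q :: rest, n => (q + 1) :: entMid q rest n

lemma sqPos_cons {A : List Bool} {As : List (List Bool)} (h : As ≠ []) :
    sqPos (A :: As) = A.length :: (sqPos As).map (· + (A.length + 2)) := by
  cases As with
  | nil => exact absurd rfl h
  | cons _ _ => rfl

lemma glue_cons {A : List Bool} {As : List (List Bool)} {b : Bool} {bs : List Bool}
    (h : As ≠ []) : glue (A :: As) (b :: bs) = A ++ [b, b] ++ glue As bs := by
  cases As with
  | nil => exact absurd rfl h
  | cons _ _ => rfl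

lemma seqMid_cons {A : List Bool} {As : List (List Bool)} (h : As ≠ []) :
    seqMid (A :: As) = (A.length + 2) :: seqMid As := by
  cases As with
  | nil => exact absurd rfl h
  | cons _ _ => rfl

lemma seqOf_cons {A : List Bool} {As : List (List Bool)} (h : As ≠ []) :
    seqOf (A :: As) = (A.length + 1) :: seqMid As := by
  cases As with
  | nil => exact absurd rfl h
  | cons _ _ => rfl

lemma sqPos_sorted : ∀ As : List (List Bool), (sqPos As).Pairwise (· < ·) := by
  intro As
  induction As with
  | nil => simp [sqPos]
  | cons A As ih =>
    cases As with
    | nil => simp [sqPos]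
    | cons A' As' =>
      rw [sqPos_cons (by simp)]
      rw [List.pairwise_cons]
      constructor
      · intro x hx
        simp only [List.mem_map] at hx
        obtain ⟨y, _, rfl⟩ := hx
        omega
      · exact List.Pairwise.map _ (fun a b h => by omega) ih

lemma avoidsCubes_infix {w t : List Bool} (h : t <:+: w) (hc : AvoidsCubes w) :
    AvoidsCubes t :=
  ⟨fun h' => hc.1 (h'.trans h), fun h' => hc.2 (h'.trans h)⟩

theorem sq_char : ∀ (bs : List Bool) (As : List (List Bool)) (w : List Bool),
    As.length = bs.length + 1 → (∀ A ∈ As, Alt A) → w = glue As bs → AvoidsCubes w →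
    ∀ p, Sq w p ↔ p ∈ sqPos As := by
  intro bs
  induction bs with
  | nil =>
    intro As w hlen halt hw hc p
    obtain ⟨A, rfl⟩ := List.length_eq_one_iff.1 hlen
    have hwA : w = A := hw
    subst hwA
    simp only [sqPos, List.not_mem_nil, iff_false]
    rintro ⟨hb, he⟩
    exact alt_iff.1 (halt w (by simp)) p hb he
  | cons b bs' ih =>
    intro As w hlen halt hw hc p
    obtain ⟨A, As', rfl⟩ : ∃ A As', As = A :: As' := by
      cases As with
      | nil => simp at hlen
      | cons A As' => exact ⟨A, As', rfl⟩
    have hAs' : As' ≠ [] := by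
      intro h; subst h; simp at hlen
    set c := A.length with hc'
    set w' := glue As' bs' with hw'd
    have hglue : w = (A ++ [b, b]) ++ w' := by
      rw [hw, glue_cons hAs', List.append_assoc, ← List.append_assoc]
    have hlen2 : (A ++ [b, b]).length = c + 2 := by simp [hc']
    have hwlen : w.length = c + 2 + w'.length := by rw [hglue]; simp; omega
    have hA : ∀ i, i < c → w.getD i false = A.getD i false := by
      intro i hi
      rw [hglue, List.getD_append _ _ _ _ (by simp; omega), List.getD_append _ _ _ _ hi]
    have hb1 : w.getD c false = b := by
      rw [hglue, List.getD_append _ _ _ _ (by simp; omega),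
        List.getD_append_right _ _ _ _ (by omega)]
      simp [hc']
    have hb2 : w.getD (c+1) false = b := by
      rw [hglue, List.getD_append _ _ _ _ (by simp; omega),
        List.getD_append_right _ _ _ _ (by omega)]
      simp [hc']
    have hw'' : ∀ i, w.getD (c+2+i) false = w'.getD i false := by
      intro i
      rw [hglue, List.getD_append_right _ _ _ _ (by omega)]
      congr 1; omega
    have hmem : ∀ q : ℕ, q ∈ sqPos (A :: As') ↔ q = c ∨ ∃ x ∈ sqPos As', x + (c+2) = q := by
      intro q; rw [sqPos_cons hAs']; simp [hc']
    have hcube : ∀ q : ℕ, q + 2 < w.length → w.getD q false = w.getD (q+1) false →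
        w.getD (q+1) false = w.getD (q+2) false → False := by
      intro q hq h1 h2
      have h := three_infix (w := w) (p := q) hq
      rw [h1, ← h2] at h
      exact no_bbb hc _ (by rwa [h2] at h)
    rcases lt_trichotomy (p+1) c with hp | hp | hp
    · -- inside A
      rw [hmem]
      constructor
      · rintro ⟨hbd, he⟩
        exfalso
        rw [hA p (by omega), hA (p+1) hp] at he
        exact alt_iff.1 (halt A (by simp)) p (by omega) he
      · rintro (h | ⟨x, _, h⟩) <;> omega
    · -- junction p+1 = c
      rw [hmem]
      constructor
      · rintro ⟨hbd, he⟩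
        exfalso
        apply hcube p (by omega)
        · exact he
        · rw [show p + 1 = c from hp, show p + 2 = c + 1 by omega, hb1, hb2]
      · rintro (h | ⟨x, _, h⟩) <;> omega
    · -- p ≥ c
      rcases Nat.lt_or_ge p (c+2) with hp2 | hp2
      · by_cases hpc : p = c
        · rw [hmem]
          constructor
          · intro _; exact Or.inl hpc
          · intro _
            refine ⟨by omega, ?_⟩
            rw [hpc, hb1, hb2]
        · have hpc2 : p = c + 1 := by omega
          rw [hmem]
          constructor
          · rintro ⟨hbd, he⟩
            exfalso
            rcases Nat.eq_zero_or_pos w'.length with h0 | h0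
            · omega
            · apply hcube c (by omega)
              · rw [hb1, hb2]
              · rw [hpc2] at he
                rw [show c + 1 + 1 = c + 2 by omega] at he
                exact he
          · rintro (h | ⟨x, hx, h⟩) <;> omega
      · -- p ≥ c + 2 : recurse
        have hiff : Sq w p ↔ Sq w' (p - (c+2)) := by
          unfold Sq
          have e1 : w.getD p false = w'.getD (p - (c+2)) false := by
            have := hw'' (p - (c+2))
            rwa [show c + 2 + (p - (c+2)) = p by omega] at this
          have e2 : w.getD (p+1) false = w'.getD (p - (c+2) + 1) false := by
            have := hw'' (p - (c+2) + 1)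
            rwa [show c + 2 + (p - (c+2) + 1) = p + 1 by omega] at this
          rw [e1, e2, hwlen]
          constructor
          · rintro ⟨h1, h2⟩; exact ⟨by omega, h2⟩
          · rintro ⟨h1, h2⟩; exact ⟨by omega, h2⟩
        rw [hiff, ih As' w' (by simpa using hlen) (fun B hB => halt B (by simp [hB])) rfl
          (avoidsCubes_infix ⟨A ++ [b,b], [], by simpa using hglue.symm⟩ hc) (p - (c+2)),
          hmem]
        constructor
        · intro hx
          exact Or.inr ⟨p - (c+2), hx, by omega⟩
        · rintro (h | ⟨x, hx, h⟩)
          · omega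
          · convert hx using 1; omega

lemma entMid_length (n : ℕ) : ∀ (rest : List ℕ) (prev : ℕ),
    (entMid prev rest n).length = rest.length + 1 := by
  intro rest
  induction rest with
  | nil => intro prev; rfl
  | cons r rest ih => intro prev; simp [entMid, ih]

lemma ent_length {n : ℕ} (hn : 0 < n) (qs : List ℕ) : (ent qs n).length = qs.length + 1 := by
  cases qs with
  | nil =>
    have h : ent [] n = [n] := by
      show (if n = 0 then [] else [n]) = [n]
      rw [if_neg (by omega)]
    rw [h]; rfl
  | cons q rest => simp [ent, entMid_length]

lemma entMid_gap (n : ℕ) : ∀ (rest : List ℕ) (prev j : ℕ), j + 1 < rest.length →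
    (entMid prev rest n).getD (j+1) 0 = rest.getD (j+1) 0 - rest.getD j 0 := by
  intro rest
  induction rest with
  | nil => intro prev j h; simp at h
  | cons r rest ih =>
    intro prev j h
    cases j with
    | zero =>
      cases rest with
      | nil => simp at h
      | cons r' rest' => simp [entMid]
    | succ j' =>
      have := ih r j' (by simpa using h)
      simpa [entMid] using this

lemma ent_gap {n : ℕ} (qs : List ℕ) (j : ℕ) (h : j + 1 < qs.length) :
    (ent qs n).getD (j+1) 0 = qs.getD (j+1) 0 - qs.getD j 0 := by
  cases qs with
  | nil => simp at h
  | cons q rest =>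
    cases j with
    | zero =>
      cases rest with
      | nil => simp at h
      | cons r rest' => simp [ent, entMid]
    | succ j' =>
      have := entMid_gap n rest q j' (by simpa using h)
      simpa [ent] using this

lemma ent_head (q : ℕ) (rest : List ℕ) (n : ℕ) : (ent (q :: rest) n).getD 0 0 = q + 1 := rfl

lemma entMid_last (n : ℕ) : ∀ (rest : List ℕ) (prev : ℕ),
    (entMid prev rest n).getD rest.length 0 = n - 1 - (prev :: rest).getD rest.length 0 := by
  intro rest
  induction rest with
  | nil => intro prev; rfl
  | cons r rest ih =>
    intro prev
    have := ih r
    simpa [entMid] using this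

lemma ent_last {n : ℕ} (qs : List ℕ) (h : qs ≠ []) :
    (ent qs n).getD qs.length 0 = n - 1 - qs.getD (qs.length - 1) 0 := by
  cases qs with
  | nil => exact absurd rfl h
  | cons q rest =>
    have := entMid_last n rest q
    simpa [ent] using this

lemma seqMid_ent : ∀ (bs' : List Bool) (As' : List (List Bool)) (w' : List Bool) (c : ℕ),
    As'.length = bs'.length + 1 → w' = glue As' bs' →
    seqMid As' = entMid c ((sqPos As').map (· + (c+2))) (c + 2 + w'.length) := by
  intro bs'
  induction bs' with
  | nil =>
    intro As' w' c hlen hw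
    obtain ⟨A, rfl⟩ := List.length_eq_one_iff.1 hlen
    have hwA : w' = A := hw
    subst hwA
    simp [seqMid, sqPos, entMid]
    omega
  | cons b bs'' ih =>
    intro As' w' c hlen hw
    obtain ⟨A, As'', rfl⟩ : ∃ A As'', As' = A :: As'' := by
      cases As' with
      | nil => simp at hlen
      | cons A As'' => exact ⟨A, As'', rfl⟩
    have hAs'' : As'' ≠ [] := by intro h; subst h; simp at hlen
    have hglue : w' = A ++ [b, b] ++ glue As'' bs'' := by rw [hw, glue_cons hAs'']
    have hwlen : w'.length = A.length + 2 + (glue As'' bs'').length := by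
      rw [hglue]; simp; omega
    rw [seqMid_cons hAs'', sqPos_cons hAs'', List.map_cons, List.map_map]
    have hfun : ((· + (c+2)) ∘ (· + (A.length + 2))) = (· + (c + 2 + A.length + 2)) := by
      funext x; simp only [Function.comp]; omega
    rw [hfun, show A.length + (c + 2) = c + 2 + A.length by omega,
      show c + 2 + w'.length = c + 2 + A.length + 2 + (glue As'' bs'').length by omega]
    simp only [entMid]
    rw [show c + 2 + A.length - c = A.length + 2 by omega]
    congr 1
    exact ih As'' (glue As'' bs'') (c + 2 + A.length) (by simpa using hlen) rfl

lemma seqOf_ent : ∀ (bs : List Bool) (As : List (List Bool)) (w : List Bool),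
    IsFact As bs w → seqOf As = ent (sqPos As) w.length := by
  intro bs As w hf
  obtain ⟨hlen, halt, hw⟩ := hf
  cases bs with
  | nil =>
    obtain ⟨A, rfl⟩ := List.length_eq_one_iff.1 hlen
    have hwA : w = A := hw
    subst hwA
    cases w with
    | nil => simp [seqOf, sqPos, ent]
    | cons a A' => simp [seqOf, sqPos, ent]
  | cons b bs' =>
    obtain ⟨A, As', rfl⟩ : ∃ A As', As = A :: As' := by
      cases As with
      | nil => simp at hlen
      | cons A As' => exact ⟨A, As', rfl⟩
    have hAs' : As' ≠ [] := by intro h; subst h; simp at hlen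
    have hglue : w = A ++ [b, b] ++ glue As' bs' := by rw [hw, glue_cons hAs']
    have hwlen : w.length = A.length + 2 + (glue As' bs').length := by
      rw [hglue]; simp; omega
    rw [seqOf_cons hAs', sqPos_cons hAs']
    simp only [ent]
    congr 1
    have := seqMid_ent bs' As' (glue As' bs') A.length (by simpa using hlen) rfl
    rw [this]
    congr 1
    omega

lemma seqMid_pos : ∀ As : List (List Bool), ∀ x ∈ seqMid As, 0 < x := by
  intro As
  induction As with
  | nil => simp [seqMid]
  | cons A As ih =>
    cases As with
    | nil => simp [seqMid]
    | cons A' As' =>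
      rw [seqMid_cons (by simp)]
      intro x hx
      rcases List.mem_cons.1 hx with h | h
      · omega
      · exact ih x h

lemma seqOf_pos : ∀ As : List (List Bool), ∀ x ∈ seqOf As, 0 < x := by
  intro As x hx
  cases As with
  | nil => simp [seqOf] at hx
  | cons A As' =>
    cases As' with
    | nil =>
      rcases A with _ | ⟨a, A'⟩
      · simp [seqOf] at hx
      · simp [seqOf] at hx
        omega
    | cons A' As'' =>
      rw [seqOf_cons (by simp)] at hx
      rcases List.mem_cons.1 hx with h | h
      · omega
      · exact seqMid_pos _ x h

lemma sorted_getD_lt {qs : List ℕ} (hs : qs.Pairwise (· < ·)) {i j : ℕ}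
    (hij : i < j) (hj : j < qs.length) : qs.getD i 0 < qs.getD j 0 := by
  rw [List.getD_eq_getElem _ _ (by omega), List.getD_eq_getElem _ _ hj]
  exact List.pairwise_iff_getElem.1 hs i j (by omega) hj hij

lemma sorted_getD_le {qs : List ℕ} (hs : qs.Pairwise (· < ·)) {i j : ℕ}
    (hij : i ≤ j) (hj : j < qs.length) : qs.getD i 0 ≤ qs.getD j 0 := by
  rcases Nat.eq_or_lt_of_le hij with h | h
  · rw [h]
  · exact (sorted_getD_lt hs h hj).le

lemma sorted_index_le {qs : List ℕ} (hs : qs.Pairwise (· < ·)) {i j : ℕ}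
    (hi : i < qs.length) (hj : j < qs.length)
    (h : qs.getD i 0 ≤ qs.getD j 0) : i ≤ j := by
  by_contra hcon
  have := sorted_getD_lt hs (by omega : j < i) hi
  omega

lemma sorted_index_unique {qs : List ℕ} (hs : qs.Pairwise (· < ·)) {i j : ℕ}
    (hi : i < qs.length) (hj : j < qs.length)
    (h : qs.getD i 0 = qs.getD j 0) : i = j := by
  have h1 := sorted_index_le hs hi hj h.le
  have h2 := sorted_index_le hs hj hi h.ge
  omega

lemma getD_mem {qs : List ℕ} {i : ℕ} (h : i < qs.length) : qs.getD i 0 ∈ qs := by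
  rw [List.getD_eq_getElem _ _ h]
  exact List.getElem_mem h

lemma mem_getD {qs : List ℕ} {p : ℕ} (h : p ∈ qs) :
    ∃ i, i < qs.length ∧ qs.getD i 0 = p := by
  obtain ⟨i, hi, he⟩ := List.mem_iff_getElem.1 h
  exact ⟨i, hi, by rw [List.getD_eq_getElem _ _ hi]; exact he⟩

lemma adjacent_squares {qs : List ℕ} (hs : qs.Pairwise (· < ·)) {P Q : ℕ}
    (hP : P ∈ qs) (hQ : Q ∈ qs) (hPQ : P < Q)
    (hbetween : ∀ r ∈ qs, ¬ (P < r ∧ r < Q)) :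
    ∃ i, i + 1 < qs.length ∧ qs.getD i 0 = P ∧ qs.getD (i+1) 0 = Q := by
  obtain ⟨i, hi, hie⟩ := mem_getD hP
  obtain ⟨j, hj, hje⟩ := mem_getD hQ
  have hij : i < j := by
    have h1 := sorted_index_le hs hi hj (by omega)
    rcases Nat.eq_or_lt_of_le h1 with h | h
    · exfalso; rw [h, hje] at hie; omega
    · exact h
  have hji : j = i + 1 := by
    by_contra hne
    have hi1 : i + 1 < qs.length := by omega
    have h1 := sorted_getD_lt hs (by omega : i < i+1) hi1
    have h2 := sorted_getD_lt hs (by omega : i + 1 < j) hj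
    exact hbetween _ (getD_mem hi1) ⟨by omega, by omega⟩
  exact ⟨i, by omega, hie, by rw [← hji]; exact hje⟩

lemma ent_head' {qs : List ℕ} {N : ℕ} (h : qs ≠ []) :
    (ent qs N).getD 0 0 = qs.getD 0 0 + 1 := by
  cases qs with
  | nil => exact absurd rfl h
  | cons q rest => rfl

lemma valley_to_pattern {w : List Bool} {qs : List ℕ}
    (hsq : ∀ p, Sq w p ↔ p ∈ qs) (hsort : qs.Pairwise (· < ·))
    (hnv : ¬ NoValley (ent qs w.length)) : ¬ AvoidsP w := by
  set N := w.length with hNdef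
  unfold NoValley at hnv
  push_neg at hnv
  obtain ⟨j, hj1, hj2, hge, hle⟩ := hnv
  set k := qs.length with hkdef
  have hqsne : qs ≠ [] := by
    intro h
    subst h
    have : (ent ([] : List ℕ) N).length ≤ 1 := by
      show (if N = 0 then ([] : List ℕ) else [N]).length ≤ 1
      split <;> simp
    omega
  have hN : 0 < N := by
    obtain ⟨p, hp⟩ := List.exists_mem_of_ne_nil qs hqsne
    have := ((hsq p).2 hp).1
    omega
  have hnlen := ent_length hN qs
  rw [hnlen] at hj2
  have hjk : j < k := by omega
  set P := qs.getD (j-1) 0 with hPdef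
  set Q := qs.getD j 0 with hQdef
  have hPQ : P < Q := sorted_getD_lt hsort (by omega) hjk
  set m := Q - P with hmdef
  have hnj : (ent qs N).getD j 0 = m := by
    have := ent_gap (n := N) qs (j-1) (by omega)
    rwa [show j - 1 + 1 = j by omega] at this
  have hSqP : Sq w P := (hsq P).2 (getD_mem (by omega))
  have hSqQ : Sq w Q := (hsq Q).2 (getD_mem hjk)
  have hbet : ∀ p, P < p → p < Q → ¬ Sq w p := by
    intro p h1 h2 hS
    obtain ⟨t, ht, hte⟩ := mem_getD ((hsq p).1 hS)
    have t1 : j - 1 < t := by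
      by_contra hcon
      have := sorted_getD_le hsort (by omega : t ≤ j - 1) (by omega)
      omega
    have t2 : t < j := by
      by_contra hcon
      have := sorted_getD_le hsort (by omega : j ≤ t) ht
      omega
    omega
  have haL : m ≤ P + 1 ∧ ∀ p, P + 1 - m ≤ p → p < P → ¬ Sq w p := by
    rcases Nat.eq_or_lt_of_le hj1 with hj1' | hj1'
    · -- j = 1
      have h0 : (ent qs N).getD 0 0 = P + 1 := by
        rw [ent_head' hqsne, hPdef, show j - 1 = 0 by omega]
      constructor
      · rw [show j - 1 = 0 by omega, h0, hnj] at hge; omega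
      · intro p hp1 hp2 hS
        obtain ⟨t, ht, hte⟩ := mem_getD ((hsq p).1 hS)
        have := sorted_getD_le hsort (by omega : 0 ≤ t) ht
        have : qs.getD 0 0 ≤ p := by omega
        have hP0 : P = qs.getD 0 0 := by rw [hPdef, show j - 1 = 0 by omega]
        omega
    · -- j ≥ 2
      have hgap : (ent qs N).getD (j-1) 0 = qs.getD (j-1) 0 - qs.getD (j-2) 0 := by
        have := ent_gap (n := N) qs (j-2) (by omega)
        rwa [show j - 2 + 1 = j - 1 by omega] at this
      have hP' : qs.getD (j-2) 0 < P := sorted_getD_lt hsort (by omega) (by omega)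
      rw [hnj] at hge
      rw [hgap] at hge
      constructor
      · omega
      · intro p hp1 hp2 hS
        obtain ⟨t, ht, hte⟩ := mem_getD ((hsq p).1 hS)
        have t2 : t < j - 1 := by
          by_contra hcon
          have := sorted_getD_le hsort (by omega : j - 1 ≤ t) ht
          omega
        have := sorted_getD_le hsort (by omega : t ≤ j - 2) (by omega)
        omega
  have hbR : Q + 1 + m ≤ N ∧ ∀ p, Q < p → p < Q + m → ¬ Sq w p := by
    rw [hnj] at hle
    rcases Nat.lt_or_ge (j+1) k with hjk1 | hjk1
    · have hgap : (ent qs N).getD (j+1) 0 = qs.getD (j+1) 0 - qs.getD j 0 :=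
        ent_gap (n := N) qs j hjk1
      rw [hgap] at hle
      have hQ'' : Q < qs.getD (j+1) 0 := sorted_getD_lt hsort (by omega) hjk1
      have hbd : qs.getD (j+1) 0 + 1 < N := ((hsq _).2 (getD_mem hjk1)).1
      constructor
      · omega
      · intro p hp1 hp2 hS
        obtain ⟨t, ht, hte⟩ := mem_getD ((hsq p).1 hS)
        have t1 : j < t := by
          by_contra hcon
          have := sorted_getD_le hsort (by omega : t ≤ j) hjk
          omega
        have := sorted_getD_le hsort (by omega : j + 1 ≤ t) ht
        omega
    · -- j + 1 = k : last entry
      have hjk2 : j + 1 = k := by omega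
      have hlast : (ent qs N).getD (j+1) 0 = N - 1 - Q := by
        have := ent_last (n := N) qs hqsne
        rw [← hkdef] at this
        rw [show j + 1 = k from hjk2, this, hQdef, show k - 1 = j by omega]
      rw [hlast] at hle
      have hQbd : Q + 1 < N := hSqQ.1
      constructor
      · omega
      · intro p hp1 hp2 hS
        obtain ⟨t, ht, hte⟩ := mem_getD ((hsq p).1 hS)
        have := sorted_getD_le hsort (by omega : t ≤ k - 1) (by omega)
        have hQk : qs.getD (k-1) 0 = Q := by rw [hQdef, show k - 1 = j by omega]
        omega
  -- build the pattern occurrence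
  set a0 := P + 1 - m with ha0def
  have hPbd : P + 1 < N := hSqP.1
  have hQbd : Q + 1 < N := hSqQ.1
  have hb1 : a0 + m ≤ N := by omega
  have hb2 : P + 1 + m ≤ N := by omega
  have hb3 : Q + 1 + m ≤ N := by omega
  have hPm : P + 1 = a0 + m := by omega
  have hQm : Q + 1 = P + 1 + m := by omega
  set xL := seg w a0 m with hxL
  set xM := seg w (P+1) m with hxM
  set xR := seg w (Q+1) m with hxR
  have hAltL : Alt xL := by
    apply alt_seg hb1
    intro p hp1 hp2
    exact haL.2 p (by omega) (by omega)
  have hAltM : Alt xM := by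
    apply alt_seg hb2
    intro p hp1 hp2
    exact hbet p (by omega) (by omega)
  have hAltR : Alt xR := by
    apply alt_seg hb3
    intro p hp1 hp2
    exact hbR.2 p (by omega) (by omega)
  have hlenL : xL.length = m := seg_length hb1
  have hlenM : xM.length = m := seg_length hb2
  have hlenR : xR.length = m := seg_length hb3
  have hm1 : 1 ≤ m := by omega
  have hML : xM = xL.reverse := by
    apply alt_ext hAltM (alt_reverse hAltL) (by rw [hlenM, List.length_reverse, hlenL])
    rw [reverse_getD (by omega), hlenL, seg_getD (by omega) hb2,
      seg_getD (by omega) hb1, show P + 1 + 0 = P + 1 by omega,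
      show a0 + (m - 1 - 0) = P by omega]
    exact hSqP.2.symm
  have hL0 : xL.getD 0 false = w.getD Q false := by
    have : xL.getD 0 false = xL.reverse.getD (m-1) false := by
      rw [reverse_getD (by omega), hlenL]
      congr 1
      omega
    rw [this, ← hML, seg_getD (by omega) hb2, show P + 1 + (m-1) = Q by omega]
  have hRL : xR = xL := by
    apply alt_ext hAltR hAltL (by rw [hlenR, hlenL])
    rw [seg_getD (by omega) hb3, show Q + 1 + 0 = Q + 1 by omega, hL0]
    exact hSqQ.2.symm
  have hocc : xL ++ xL.reverse ++ xL <:+: w := by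
    rw [← hML]
    nth_rewrite 2 [← hRL]
    have e1 : seg w a0 (m + (m + m)) = xL ++ (xM ++ xR) := by
      rw [seg_append, ← hPm, seg_append, ← hQm]
    have e2 : xL ++ xL.reverse ++ xL = xL ++ (xL.reverse ++ xL) := by
      rw [List.append_assoc]
    rw [← hML, ← hRL] at *
    rw [List.append_assoc, ← e1]
    exact seg_infix w a0 (m + (m+m))
  intro hA
  exact hA ⟨xL, by
    intro h
    rw [h] at hlenL
    simp at hlenL
    omega, hocc⟩

lemma pattern_to_valley {w : List Bool} {qs : List ℕ}
    (hc : AvoidsCubes w)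
    (hsq : ∀ p, Sq w p ↔ p ∈ qs) (hsort : qs.Pairwise (· < ·))
    (hnv : NoValley (ent qs w.length)) : AvoidsP w := by
  rintro ⟨u, hune, hocc⟩
  set N := w.length with hNdef
  set m := u.length with hmdef
  have hm0 : 0 < m := List.length_pos_iff.2 hune
  obtain ⟨s, t, hst⟩ := hocc
  set q := s.length with hqdef
  have hqN : q + 3*m ≤ N := by
    have := congrArg List.length hst
    simp at this
    omega
  have hmid : ∀ i, i < 3*m → w.getD (q+i) false = (u ++ u.reverse ++ u).getD i false := by
    intro i hi
    rw [← hst, List.getD_append _ _ _ _ (by simp; omega),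
      List.getD_append_right _ _ _ _ (by omega), show q + i - s.length = i by omega]
  have h1 : ∀ i, i < m → w.getD (q+i) false = u.getD i false := by
    intro i hi
    rw [hmid i (by omega), List.getD_append _ _ _ _ (by simp; omega),
      List.getD_append _ _ _ _ (by omega)]
  have h2 : ∀ i, i < m → w.getD (q+m+i) false = u.getD (m-1-i) false := by
    intro i hi
    rw [show q+m+i = q+(m+i) by omega, hmid (m+i) (by omega),
      List.getD_append _ _ _ _ (by simp; omega),
      List.getD_append_right _ _ _ _ (by omega), show m + i - u.length = i by omega,
      reverse_getD (by omega)]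
  have h3 : ∀ i, i < m → w.getD (q+2*m+i) false = u.getD i false := by
    intro i hi
    rw [show q+2*m+i = q+(2*m+i) by omega, hmid (2*m+i) (by omega),
      List.getD_append_right _ _ _ _ (by simp; omega)]
    congr 1
    simp
    omega
  have hpal : ∀ r, q ≤ r → r < q+2*m → w.getD r false = w.getD (2*q+2*m-1-r) false := by
    intro r hr1 hr2
    rcases Nat.lt_or_ge r (q+m) with h | h
    · have e1 : w.getD r false = u.getD (r-q) false := by
        have := h1 (r-q) (by omega)
        rwa [show q+(r-q) = r by omega] at this
      have e2 : w.getD (2*q+2*m-1-r) false = u.getD (r-q) false := by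
        have := h2 (m-1-(r-q)) (by omega)
        rw [show q+m+(m-1-(r-q)) = 2*q+2*m-1-r by omega] at this
        rw [this]
        congr 1
        omega
      rw [e1, e2]
    · have e1 : w.getD r false = u.getD (m-1-(r-q-m)) false := by
        have := h2 (r-q-m) (by omega)
        rwa [show q+m+(r-q-m) = r by omega] at this
      have e2 : w.getD (2*q+2*m-1-r) false = u.getD (2*m-1-(r-q)) false := by
        have := h1 (2*m-1-(r-q)) (by omega)
        rwa [show q+(2*m-1-(r-q)) = 2*q+2*m-1-r by omega] at this
      rw [e1, e2]
      congr 1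
      omega
  have hSqm1 : Sq w (q+m-1) := by
    refine ⟨by omega, ?_⟩
    have e1 : w.getD (q+m-1) false = u.getD (m-1) false := by
      have := h1 (m-1) (by omega)
      rwa [show q+(m-1) = q+m-1 by omega] at this
    have e2 : w.getD (q+m-1+1) false = u.getD (m-1) false := by
      have := h2 0 (by omega)
      rwa [show q+m+0 = q+m-1+1 by omega, show m-1-0 = m-1 by omega] at this
    rw [e1, e2]
  have hSq2m1 : Sq w (q+2*m-1) := by
    refine ⟨by omega, ?_⟩
    have e1 : w.getD (q+2*m-1) false = u.getD 0 false := by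
      have := h2 (m-1) (by omega)
      rwa [show q+m+(m-1) = q+2*m-1 by omega, show m-1-(m-1) = 0 by omega] at this
    have e2 : w.getD (q+2*m-1+1) false = u.getD 0 false := by
      have := h3 0 (by omega)
      rwa [show q+2*m+0 = q+2*m-1+1 by omega] at this
    rw [e1, e2]
  have hm2 : 2 ≤ m := by
    by_contra hcon
    have hm1 : m = 1 := by omega
    have ha : w.getD q false = w.getD (q+1) false := by
      have ea := h1 0 (by omega)
      have eb := h2 0 (by omega)
      rw [show q+0 = q by omega] at ea
      rw [show q+m+0 = q+1 by omega, show m-1-0 = 0 by omega] at eb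
      rw [ea, eb]
    have hb : w.getD (q+1) false = w.getD (q+2) false := by
      have eb := h2 0 (by omega)
      have hcc := h3 0 (by omega)
      rw [show q+m+0 = q+1 by omega, show m-1-0 = 0 by omega] at eb
      rw [show q+2*m+0 = q+2 by omega] at hcc
      rw [eb, hcc]
    exact no_sq_sq hc ⟨by omega, ha⟩ ⟨by omega, by
      rw [show q+1+1 = q+2 by omega]; exact hb⟩
  have hF2 : ∀ o, o ≤ 2*m-2 → Sq w (q+o) → Sq w (q+(2*m-2-o)) := by
    intro o ho hS
    have e1 : w.getD (q+(2*m-2-o)) false = w.getD (q+o+1) false := by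
      have := hpal (q+(2*m-2-o)) (by omega) (by omega)
      rw [this]
      congr 1
      omega
    have e2 : w.getD (q+(2*m-2-o)+1) false = w.getD (q+o) false := by
      have := hpal (q+(2*m-2-o)+1) (by omega) (by omega)
      rw [this]
      congr 1
      omega
    exact ⟨by omega, by rw [e1, e2]; exact hS.2.symm⟩
  have hF1 : ∀ o, o + 1 ≤ m-1 → Sq w (q+o) → Sq w (q+(2*m+o)) := by
    intro o ho hS
    have e1 : w.getD (q+(2*m+o)) false = w.getD (q+o) false := by
      have ea := h3 o (by omega)
      have eb := h1 o (by omega)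
      rw [show q+2*m+o = q+(2*m+o) by omega] at ea
      rw [ea, eb]
    have e2 : w.getD (q+(2*m+o)+1) false = w.getD (q+o+1) false := by
      have ea := h3 (o+1) (by omega)
      have eb := h1 (o+1) (by omega)
      rw [show q+2*m+(o+1) = q+(2*m+o)+1 by omega] at ea
      rw [show q+(o+1) = q+o+1 by omega] at eb
      rw [ea, eb]
    exact ⟨by omega, by rw [e1, e2]; exact hS.2⟩
  have hF1' : ∀ o, o + 1 ≤ m-1 → Sq w (q+(2*m+o)) → Sq w (q+o) := by
    intro o ho hS
    have e1 : w.getD (q+(2*m+o)) false = w.getD (q+o) false := by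
      have ea := h3 o (by omega)
      have eb := h1 o (by omega)
      rw [show q+2*m+o = q+(2*m+o) by omega] at ea
      rw [ea, eb]
    have e2 : w.getD (q+(2*m+o)+1) false = w.getD (q+o+1) false := by
      have ea := h3 (o+1) (by omega)
      have eb := h1 (o+1) (by omega)
      rw [show q+2*m+(o+1) = q+(2*m+o)+1 by omega] at ea
      rw [show q+(o+1) = q+o+1 by omega] at eb
      rw [ea, eb]
    exact ⟨by omega, by rw [← e1, ← e2]; exact hS.2⟩
  have hqsne : qs ≠ [] := by
    intro h
    have := (hsq _).1 hSqm1
    rw [h] at this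
    simp at this
  have hN : 0 < N := by omega
  have hnlen := ent_length hN qs
  set k := qs.length with hkdef
  by_cases hs : ∃ p, p ≤ m - 2 ∧ Sq w (q + p)
  · -- x contains a square
    have he'spec := Nat.find_spec hs
    set e' := Nat.find hs with he'def
    have hmin' : ∀ p, p < e' → ¬ Sq w (q+p) := by
      intro p hp hS
      exact Nat.find_min hs hp ⟨by omega, hS⟩
    set PP := fun p => Sq w (q + p) with hPPdef
    set e := Nat.findGreatest PP (m-2) with hedef
    have heS : Sq w (q+e) := Nat.findGreatest_spec (P := PP) he'spec.1 he'spec.2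
    have he_le : e ≤ m - 2 := Nat.findGreatest_le (P := PP) _
    have hmax : ∀ p, e < p → p ≤ m-2 → ¬ Sq w (q+p) := by
      intro p hp1 hp2
      exact Nat.findGreatest_is_greatest (P := PP) hp1 hp2
    have he'e : e' ≤ e := Nat.le_findGreatest (P := PP) he'spec.1 he'spec.2
    -- the six squares
    have hSA2 : Sq w (q+2*m-2-e) := by
      have := hF2 e (by omega) heS
      rwa [show q+(2*m-2-e) = q+2*m-2-e by omega] at this
    have hSB0 : Sq w (q+2*m-2-e') := by
      have := hF2 e' (by omega) he'spec.2
      rwa [show q+(2*m-2-e') = q+2*m-2-e' by omega] at this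
    have hSB2 : Sq w (q+2*m+e') := by
      have := hF1 e' (by omega) he'spec.2
      rwa [show q+(2*m+e') = q+2*m+e' by omega] at this
    -- gaps contain no squares
    have hbet1 : ∀ r ∈ qs, ¬(q+e < r ∧ r < q+m-1) := by
      rintro r hr ⟨ha, hb⟩
      have hSr : Sq w r := (hsq r).2 hr
      rw [show r = q + (r-q) by omega] at hSr
      exact hmax (r-q) (by omega) (by omega) hSr
    have hbet2 : ∀ r ∈ qs, ¬(q+m-1 < r ∧ r < q+2*m-2-e) := by
      rintro r hr ⟨ha, hb⟩
      have hSr : Sq w r := (hsq r).2 hr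
      rw [show r = q + (r-q) by omega] at hSr
      have := hF2 (r-q) (by omega) hSr
      exact hmax (2*m-2-(r-q)) (by omega) (by omega) this
    have hbet3 : ∀ r ∈ qs, ¬(q+2*m-2-e' < r ∧ r < q+2*m-1) := by
      rintro r hr ⟨ha, hb⟩
      have hSr : Sq w r := (hsq r).2 hr
      rw [show r = q + (r-q) by omega] at hSr
      have := hF2 (r-q) (by omega) hSr
      exact hmin' (2*m-2-(r-q)) (by omega) this
    have hbet4 : ∀ r ∈ qs, ¬(q+2*m-1 < r ∧ r < q+2*m+e') := by
      rintro r hr ⟨ha, hb⟩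
      have hSr : Sq w r := (hsq r).2 hr
      rw [show r = q + (2*m + (r-q-2*m)) by omega] at hSr
      have := hF1' (r-q-2*m) (by omega) hSr
      exact hmin' (r-q-2*m) (by omega) this
    -- adjacency indices
    obtain ⟨i, hik, hi0, hi1⟩ := adjacent_squares hsort ((hsq _).1 heS)
      ((hsq _).1 hSqm1) (by omega) hbet1
    obtain ⟨i2, hik2, hi20, hi21⟩ := adjacent_squares hsort ((hsq _).1 hSqm1)
      ((hsq _).1 hSA2) (by omega) hbet2
    have hi2e : i2 = i + 1 := by
      apply (sorted_index_unique hsort (by omega) (by omega) _).symm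
      rw [hi1, hi20]
    subst hi2e
    obtain ⟨l, hlk, hl0, hl1⟩ := adjacent_squares hsort ((hsq _).1 hSB0)
      ((hsq _).1 hSq2m1) (by omega) hbet3
    obtain ⟨l2, hlk2, hl20, hl21⟩ := adjacent_squares hsort ((hsq _).1 hSq2m1)
      ((hsq _).1 hSB2) (by omega) hbet4
    have hl2e : l2 = l + 1 := by
      apply (sorted_index_unique hsort (by omega) (by omega) _).symm
      rw [hl1, hl20]
    subst hl2e
    have hil : i + 2 ≤ l := by
      apply sorted_index_le hsort (by omega) (by omega)
      rw [hi21, hl0]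
      omega
    -- entry values
    have hni1 : (ent qs N).getD (i+1) 0 = m-1-e := by
      rw [ent_gap qs i hik, hi1, hi0]
      omega
    have hni2 : (ent qs N).getD (i+2) 0 = m-1-e := by
      have := ent_gap (n := N) qs (i+1) (by omega)
      rw [show i+1+1 = i+2 by omega] at this
      rw [this, hi21, hi1]
      omega
    have hnl1 : (ent qs N).getD (l+1) 0 = e'+1 := by
      rw [ent_gap qs l hlk, hl1, hl0]
      omega
    have hnl2 : (ent qs N).getD (l+2) 0 = e'+1 := by
      have := ent_gap (n := N) qs (l+1) (by omega)
      rw [show l+1+1 = l+2 by omega] at this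
      rw [this, hl21, hl1]
      omega
    -- descending chain
    have hchain : ∀ t, i+3 ≤ t → t ≤ l+1 →
        (ent qs N).getD t 0 < (ent qs N).getD (t-1) 0 := by
      intro t
      induction t with
      | zero => intro h1' h2'; omega
      | succ t ih =>
        intro h1' h2'
        rcases Nat.eq_or_lt_of_le h1' with hb | hb
        · have hv := hnv (i+2) (by omega) (by rw [hnlen]; omega)
          have hB : ¬ ((ent qs N).getD (i+2) 0 ≤ (ent qs N).getD (i+3) 0) := by
            intro hB
            exact hv ⟨by rw [show i+2-1 = i+1 by omega, hni1, hni2], hB⟩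
          rw [← hb, show i+3-1 = i+2 by omega]
          omega
        · have hprev := ih (by omega) (by omega)
          have hv := hnv t (by omega) (by rw [hnlen]; omega)
          have hB : ¬ ((ent qs N).getD t 0 ≤ (ent qs N).getD (t+1) 0) := by
            intro hB
            exact hv ⟨by rw [show t-1 = t-1 from rfl]; exact hprev.le, hB⟩
          rw [show t+1-1 = t by omega]
          omega
    have hlast := hchain (l+1) (by omega) (le_refl _)
    rw [show l+1-1 = l by omega] at hlast
    have hv := hnv (l+1) (by omega) (by rw [hnlen]; omega)
    exact hv ⟨by rw [show l+1-1 = l by omega]; exact hlast.le, by rw [hnl1, hnl2]⟩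
  · -- x is alternating
    push_neg at hs
    have hbet : ∀ r ∈ qs, ¬(q+m-1 < r ∧ r < q+2*m-1) := by
      rintro r hr ⟨ha, hb⟩
      have hSr : Sq w r := (hsq r).2 hr
      rw [show r = q + (r-q) by omega] at hSr
      have := hF2 (r-q) (by omega) hSr
      exact hs (2*m-2-(r-q)) (by omega) this
    obtain ⟨i, hik, hi0, hi1⟩ := adjacent_squares hsort ((hsq _).1 hSqm1)
      ((hsq _).1 hSq2m1) (by omega) hbet
    have hgap : (ent qs N).getD (i+1) 0 = m := by
      rw [ent_gap qs i hik, hi1, hi0]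
      omega
    have hleft : (ent qs N).getD i 0 ≥ m := by
      rcases Nat.eq_zero_or_pos i with hi' | hi'
      · subst hi'
        rw [ent_head' hqsne, hi0]
        omega
      · have hg : (ent qs N).getD i 0 = qs.getD i 0 - qs.getD (i-1) 0 := by
          have := ent_gap (n := N) qs (i-1) (by omega)
          rwa [show i-1+1 = i by omega] at this
        have hprev : qs.getD (i-1) 0 < q := by
          by_contra hcon
          have hlt : qs.getD (i-1) 0 < qs.getD i 0 := sorted_getD_lt hsort (by omega) (by omega)
          rw [hi0] at hlt
          have hSr : Sq w (qs.getD (i-1) 0) := (hsq _).2 (getD_mem (by omega))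
          rw [show qs.getD (i-1) 0 = q + (qs.getD (i-1) 0 - q) by omega] at hSr
          exact hs (qs.getD (i-1) 0 - q) (by omega) hSr
        rw [hg, hi0]
        omega
    have hright : (ent qs N).getD (i+2) 0 ≥ m := by
      rcases Nat.lt_or_ge (i+2) k with hik3 | hik3
      · have hg : (ent qs N).getD (i+2) 0 = qs.getD (i+2) 0 - qs.getD (i+1) 0 := by
          have := ent_gap (n := N) qs (i+1) (by omega)
          rwa [show i+1+1 = i+2 by omega] at this
        have hnext : qs.getD (i+2) 0 ≥ q+3*m-1 := by
          by_contra hcon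
          have hlt : qs.getD (i+1) 0 < qs.getD (i+2) 0 := sorted_getD_lt hsort (by omega) hik3
          rw [hi1] at hlt
          have hSr : Sq w (qs.getD (i+2) 0) := (hsq _).2 (getD_mem hik3)
          rw [show qs.getD (i+2) 0 = q + (2*m + (qs.getD (i+2) 0 - q - 2*m)) by omega] at hSr
          have := hF1' (qs.getD (i+2) 0 - q - 2*m) (by omega) hSr
          exact hs (qs.getD (i+2) 0 - q - 2*m) (by omega) this
        rw [hg, hi1]
        omega
      · have hik4 : i + 2 = k := by omega
        have hlast : (ent qs N).getD (i+2) 0 = N - 1 - qs.getD (k-1) 0 := by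
          rw [hik4]
          exact ent_last qs hqsne
        have hk1 : qs.getD (k-1) 0 = q+2*m-1 := by
          rw [show k-1 = i+1 by omega, hi1]
        rw [hlast, hk1]
        omega
    have hv := hnv (i+1) (by omega) (by rw [hnlen]; omega)
    exact hv ⟨by rw [show i+1-1 = i by omega, hgap]; exact hleft, by
      rw [hgap, show i+1+1 = i+2 by omega]; exact hright⟩

end Stmt19
/-- A binary word avoiding `000` and `111` avoids `x xᴿ x` iff its associated sequence
belongs to `X`. -/
theorem stmt19 (w : List Bool) (hc : AvoidsCubes w)
    (As : List (List Bool)) (bs : List Bool) (hf : IsFact As bs w) :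
    AvoidsP w ↔ InX (seqOf As) := by
  obtain ⟨hlen, halt, hw⟩ := hf
  have hchar := Stmt19.sq_char bs As w hlen halt hw hc
  have hent := Stmt19.seqOf_ent bs As w ⟨hlen, halt, hw⟩
  have hsort := Stmt19.sqPos_sorted As
  constructor
  · intro hA
    refine ⟨Stmt19.seqOf_pos As, ?_⟩
    by_contra hval
    rw [hent] at hval
    exact Stmt19.valley_to_pattern hchar hsort hval hA
  · rintro ⟨hpos, hnv⟩
    rw [hent] at hnv
    exact Stmt19.pattern_to_valley hc hchar hsort hnv
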